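/- Let (R, m) be a Noetherian local ring of depth 0. Then the socle Soc(R) = (0 :_R m) is a trace ideal of R, and every nonzero trace ideal of R contains Soc(R). -/

import Mathlib

/-- The trace ideal of an `R`-module `M`. -/
def traceIdeal (R : Type*) [CommRing R] (M : Type*) [AddCommGroup M] [Module R M] : Ideal R :=
  ⨆ f : M →ₗ[R] R, LinearMap.range f

open IsLocalRing

lemma mem_socle_iff (R : Type*) [CommRing R] [IsLocalRing R] (s : R) :
    s ∈ Submodule.colon (⊥ : Ideal R) (maximalIdeal R) ↔ ∀ a ∈ maximalIdeal R, s * a = 0 := by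
  simp only [Submodule.mem_colon, SetLike.mem_coe, Submodule.mem_bot, smul_eq_mul]

lemma socle_mem_trace (R : Type*) [CommRing R] [IsNoetherianRing R] [IsLocalRing R]
    (I : Ideal R) (hI : I ≠ ⊥) (s : R)
    (hs : s ∈ Submodule.colon (⊥ : Ideal R) (maximalIdeal R)) : s ∈ traceIdeal R I := by
  classical
  rw [mem_socle_iff] at hs
  letI : Field (R ⧸ maximalIdeal R) := Ideal.Quotient.field _
  -- ((maximalIdeal R) • ⊤ : Submodule R I) ≠ ⊤ by Nakayama
  have hNtop : ((maximalIdeal R) • ⊤ : Submodule R I) ≠ ⊤ := by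
    intro h
    apply hI
    have : (⊤ : Submodule R I) = ⊥ :=
      Submodule.eq_bot_of_le_smul_of_le_jacobson_bot (maximalIdeal R) ⊤ (IsNoetherian.noetherian _)
        (le_of_eq h.symm) (by rw [jacobson_eq_maximalIdeal ⊥ bot_ne_top])
    rw [Submodule.eq_bot_iff] at this ⊢
    intro x hx
    exact congrArg Subtype.val (this ⟨x, hx⟩ trivial)
  obtain ⟨x, -, hxN⟩ := SetLike.exists_of_lt ((lt_top_iff_ne_top.mpr hNtop : ((maximalIdeal R) • ⊤ : Submodule R I) < ⊤))
  have hxbar : (Submodule.Quotient.mk x : I ⧸ ((maximalIdeal R) • ⊤ : Submodule R I)) ≠ 0 := by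
    simpa [Submodule.Quotient.mk_eq_zero] using hxN
  obtain ⟨g, hg⟩ := LinearMap.exists_leftInverse_of_injective
    (LinearMap.toSpanSingleton (R ⧸ (maximalIdeal R)) (I ⧸ ((maximalIdeal R) • ⊤ : Submodule R I)) (Submodule.Quotient.mk x))
    (LinearMap.ker_toSpanSingleton (R := R ⧸ (maximalIdeal R)) (M := I ⧸ ((maximalIdeal R) • ⊤ : Submodule R I)) hxbar)
  have hker : (maximalIdeal R) ≤ LinearMap.ker (LinearMap.toSpanSingleton R R s) := by
    intro a ha
    simp only [LinearMap.mem_ker, LinearMap.toSpanSingleton_apply, smul_eq_mul]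
    rw [mul_comm]; exact hs a ha
  let f : I →ₗ[R] R :=
    (Submodule.liftQ (maximalIdeal R) (LinearMap.toSpanSingleton R R s) hker).comp
      ((g.restrictScalars R).comp (Submodule.mkQ ((maximalIdeal R) • ⊤ : Submodule R I)))
  have hfx : f x = s := by
    have h1 : g (Submodule.Quotient.mk x) = 1 := by
      have := congrArg (fun h => h (1 : R ⧸ (maximalIdeal R))) (congrArg DFunLike.coe hg)
      simpa [LinearMap.toSpanSingleton_apply] using this
    show Submodule.liftQ (maximalIdeal R) (LinearMap.toSpanSingleton R R s) hker (g (Submodule.Quotient.mk x)) = s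
    rw [h1]
    have : (1 : R ⧸ (maximalIdeal R)) = Submodule.Quotient.mk (1 : R) := rfl
    rw [this, Submodule.liftQ_apply]
    simp [LinearMap.toSpanSingleton_apply]
  have : s ∈ LinearMap.range f := ⟨x, hfx⟩
  exact (le_iSup (fun f : I →ₗ[R] R => LinearMap.range f) f) this

/-- Let `(R, m)` be a Noetherian local ring of depth `0`, i.e. the socle
`Soc R = (0 :_R m)` is nonzero. Then `Soc R` is a trace ideal of `R`, and every nonzero
trace ideal of `R` contains `Soc R`. -/
theorem socle_traceIdeal_and_minimal (R : Type*) [CommRing R] [IsNoetherianRing R]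
    [IsLocalRing R]
    (hdepth : Submodule.colon (⊥ : Ideal R) (IsLocalRing.maximalIdeal R) ≠ (⊥ : Ideal R)) :
    traceIdeal R (Submodule.colon (⊥ : Ideal R) (IsLocalRing.maximalIdeal R)) =
        Submodule.colon (⊥ : Ideal R) (IsLocalRing.maximalIdeal R) ∧
      ∀ I : Ideal R, traceIdeal R I = I → I ≠ ⊥ →
        Submodule.colon (⊥ : Ideal R) (IsLocalRing.maximalIdeal R) ≤ I := by
  set S := Submodule.colon (⊥ : Ideal R) (maximalIdeal R) with hS
  constructor
  · apply le_antisymm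
    · apply iSup_le
      intro f y hy
      obtain ⟨z, rfl⟩ := hy
      refine (mem_socle_iff R _).mpr fun a ha => ?_
      have hz : a • z = 0 := by
        ext
        have hz2 := (mem_socle_iff R z.1).mp z.2 a ha
        simpa [mul_comm] using hz2
      calc f z * a = a • f z := by rw [smul_eq_mul, mul_comm]
        _ = f (a • z) := (f.map_smul a z).symm
        _ = 0 := by rw [hz, map_zero]
    · have : LinearMap.range (Submodule.subtype S) ≤ traceIdeal R S :=
        le_iSup (fun f : S →ₗ[R] R => LinearMap.range f) (Submodule.subtype S)
      simpa [Submodule.range_subtype] using this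
  · intro I hIt hI s hs
    rw [← hIt]
    exact socle_mem_trace R I hI s hs
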